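/- Let k be a quasi-complete totally ordered rational tropical semifield and let M be a finitely generated straight pre-reflexive k-module. Then M is reflexive. -/

import Mathlib

/-! # Tropical semifields and tropical modules -/

/-- A tropical semifield: a commutative semiring with idempotent addition
(`⊕` is `+`, `⊙` is `*`, the zero element `−∞` is `0`, the unity is `1`)
in which every nonzero element has a multiplicative inverse. -/
class TropSemifield (k : Type*) extends CommSemiring k where
  add_idem : ∀ a : k, a + a = a
  exists_inv : ∀ a : k, a ≠ 0 → ∃ b : k, a * b = 1

/-- A tropical semigroup: commutative idempotent monoid, written additively
(the zero element is `−∞`). -/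
class TropSemigroup (M : Type*) extends AddCommMonoid M where
  add_idem : ∀ v : M, v + v = v

/-- A module over a tropical semifield. -/
class TropModule (k : Type*) (M : Type*) [TropSemifield k] [TropSemigroup M] extends
    SMul k M where
  mul_smul : ∀ (a b : k) (v : M), (a * b) • v = a • b • v
  one_smul : ∀ v : M, (1 : k) • v = v
  add_smul : ∀ (a b : k) (v : M), (a + b) • v = a • v + b • v
  smul_add : ∀ (a : k) (v w : M), a • (v + w) = a • v + a • w
  zero_smul : ∀ v : M, (0 : k) • v = 0
  smul_zero : ∀ a : k, a • (0 : M) = 0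

/-- The canonical partial order `v ≤ w ↔ v ⊕ w = w`. -/
def tle {M : Type*} [Add M] (v w : M) : Prop := v + w = w

/-- Strict version of the canonical order. -/
def tlt {M : Type*} [Add M] (v w : M) : Prop := tle v w ∧ v ≠ w

/-- The canonical order of `k` is total. -/
def TotallyOrderedTSF (k : Type*) [TropSemifield k] : Prop :=
  ∀ a b : k, tle a b ∨ tle b a

/-- Every nonempty subset of `k` admits an infimum. -/
def QuasiCompleteTSF (k : Type*) [TropSemifield k] : Prop :=
  ∀ S : Set k, S.Nonempty →
    ∃ c : k, (∀ x ∈ S, tle c x) ∧ ∀ d : k, (∀ x ∈ S, tle d x) → tle d c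

/-- `k` is rational: `m`-th roots exist and `k` has no maximum element. -/
def RationalTSF (k : Type*) [TropSemifield k] : Prop :=
  (∀ (a : k) (m : ℕ), m ≠ 0 → ∃ b : k, b ^ m = a) ∧ ∀ a : k, ∃ b : k, tlt a b

instance (priority := 100) TropSemifield.toTropSemigroup (k : Type*) [TropSemifield k] :
    TropSemigroup k :=
  { (inferInstance : AddCommMonoid k) with add_idem := TropSemifield.add_idem }

instance TropModule.self (k : Type*) [TropSemifield k] : TropModule k k :=
  { (inferInstance : SMul k k) with
    mul_smul := fun a b v => mul_assoc a b v
    one_smul := fun v => one_mul v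
    add_smul := fun a b v => add_mul a b v
    smul_add := fun a v w => mul_add a v w
    zero_smul := fun v => zero_mul v
    smul_zero := fun a => mul_zero a }

instance TropSemigroup.pi {ι : Type*} (M : Type*) [TropSemigroup M] :
    TropSemigroup (ι → M) :=
  { Pi.addCommMonoid with add_idem := fun v => funext fun i => TropSemigroup.add_idem (v i) }

instance TropModule.pi (k : Type*) {ι : Type*} (M : Type*) [TropSemifield k] [TropSemigroup M]
    [TropModule k M] : TropModule k (ι → M) where
  smul a v := fun i => a • v i
  mul_smul a b v := funext fun i => TropModule.mul_smul a b (v i)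
  one_smul v := funext fun i => TropModule.one_smul (v i)
  add_smul a b v := funext fun i => TropModule.add_smul a b (v i)
  smul_add a v w := funext fun i => TropModule.smul_add a (v i) (w i)
  zero_smul v := funext fun i => TropModule.zero_smul (v i)
  smul_zero a := funext fun i => TropModule.smul_zero (a := a)

/-! ## Homomorphisms of tropical modules -/

/-- A homomorphism of `k`-modules. -/
structure TropHom (k : Type*) (M : Type*) (N : Type*) [TropSemifield k] [TropSemigroup M]
    [TropModule k M] [TropSemigroup N] [TropModule k N] where
  toFun : M → N
  map_zero' : toFun 0 = 0
  map_add' : ∀ v w : M, toFun (v + w) = toFun v + toFun w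
  map_smul' : ∀ (a : k) (v : M), toFun (a • v) = a • toFun v

namespace TropHom

variable {k M N : Type*} [TropSemifield k] [TropSemigroup M] [TropModule k M]
  [TropSemigroup N] [TropModule k N]

theorem ext' {f g : TropHom k M N} (h : ∀ v, f.toFun v = g.toFun v) : f = g := by
  cases f; cases g
  simp only [mk.injEq]
  exact funext h

instance : Zero (TropHom k M N) :=
  ⟨⟨fun _ => 0, rfl, fun _ _ => (add_zero (0 : N)).symm,
    fun a _ => (TropModule.smul_zero (M := N) a).symm⟩⟩

instance : Add (TropHom k M N) :=
  ⟨fun f g =>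
    { toFun := fun v => f.toFun v + g.toFun v
      map_zero' := by
        show f.toFun 0 + g.toFun 0 = 0
        rw [f.map_zero', g.map_zero', add_zero]
      map_add' := fun v w => by
        show f.toFun (v + w) + g.toFun (v + w) =
          (f.toFun v + g.toFun v) + (f.toFun w + g.toFun w)
        rw [f.map_add', g.map_add', add_add_add_comm]
      map_smul' := fun a v => by
        show f.toFun (a • v) + g.toFun (a • v) = a • (f.toFun v + g.toFun v)
        rw [f.map_smul', g.map_smul', TropModule.smul_add] }⟩

instance : SMul k (TropHom k M N) :=
  ⟨fun a f =>
    { toFun := fun v => a • f.toFun v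
      map_zero' := by
        show a • f.toFun 0 = 0
        rw [f.map_zero', TropModule.smul_zero]
      map_add' := fun v w => by
        show a • f.toFun (v + w) = a • f.toFun v + a • f.toFun w
        rw [f.map_add', TropModule.smul_add]
      map_smul' := fun b v => by
        show a • f.toFun (b • v) = b • (a • f.toFun v)
        rw [f.map_smul', ← TropModule.mul_smul, ← TropModule.mul_smul, mul_comm a b] }⟩

instance : TropSemigroup (TropHom k M N) where
  add := (· + ·)
  zero := 0
  add_assoc f g h := ext' fun v => add_assoc (f.toFun v) (g.toFun v) (h.toFun v)
  zero_add f := ext' fun v => zero_add (f.toFun v)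
  add_zero f := ext' fun v => add_zero (f.toFun v)
  add_comm f g := ext' fun v => add_comm (f.toFun v) (g.toFun v)
  nsmul := nsmulRec
  add_idem f := ext' fun v => TropSemigroup.add_idem (f.toFun v)

instance : TropModule k (TropHom k M N) where
  smul := (· • ·)
  mul_smul a b f := ext' fun v => TropModule.mul_smul a b (f.toFun v)
  one_smul f := ext' fun v => TropModule.one_smul (f.toFun v)
  add_smul a b f := ext' fun v => TropModule.add_smul a b (f.toFun v)
  smul_add a f g := ext' fun v => TropModule.smul_add a (f.toFun v) (g.toFun v)
  zero_smul f := ext' fun v => TropModule.zero_smul (f.toFun v)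
  smul_zero a := ext' fun v => TropModule.smul_zero (M := N) a

end TropHom

/-- The canonical map `M → (M∨)∨`, `v ↦ (ξ ↦ ⟨v, ξ⟩)`. -/
def iotaFun (k : Type*) (M : Type*) [TropSemifield k] [TropSemigroup M] [TropModule k M] :
    M → TropHom k (TropHom k M k) k :=
  fun v => ⟨fun ξ => ξ.toFun v, rfl, fun ξ η => rfl, fun a ξ => rfl⟩

/-! ## Order-theoretic notions -/

/-- `z` is the infimum of `v` and `w` w.r.t. the canonical order. -/
def IsTInf {M : Type*} [Add M] (v w z : M) : Prop :=
  tle z v ∧ tle z w ∧ ∀ y : M, tle y v → tle y w → tle y z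

/-- A tropical module is straight if it is a finitely distributive ordered lattice. -/
def Straight (M : Type*) [Add M] : Prop :=
  (∀ v w : M, ∃ z : M, IsTInf v w z) ∧
    ∀ v₁ v₂ w z₁ z₂ : M, IsTInf v₁ w z₁ → IsTInf v₂ w z₂ → IsTInf (v₁ + v₂) w (z₁ + z₂)

/-- Infimum of `v` and `w` within the subset `N`. -/
def IsTInfOn {M : Type*} [Add M] (N : Set M) (v w z : M) : Prop :=
  tle z v ∧ tle z w ∧ ∀ y ∈ N, tle y v → tle y w → tle y z

/-- A submodule (viewed as a subset) is straight. -/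
def StraightSet {M : Type*} [Add M] (N : Set M) : Prop :=
  (∀ v ∈ N, ∀ w ∈ N, ∃ z ∈ N, IsTInfOn N v w z) ∧
    ∀ v₁ ∈ N, ∀ v₂ ∈ N, ∀ w ∈ N, ∀ z₁ ∈ N, ∀ z₂ ∈ N,
      IsTInfOn N v₁ w z₁ → IsTInfOn N v₂ w z₂ → IsTInfOn N (v₁ + v₂) w (z₁ + z₂)

/-! ## Generation, bases, extremal elements -/

/-- `S` generates the `k`-module `M`. -/
def TGenerates (k : Type*) {M : Type*} [TropSemifield k] [TropSemigroup M] [TropModule k M]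
    (S : Set M) : Prop :=
  ∀ v : M, ∃ (r : ℕ) (a : Fin r → k) (x : Fin r → M), (∀ i, x i ∈ S) ∧ v = ∑ i, a i • x i

/-- `M` is finitely generated. -/
def TFG (k : Type*) (M : Type*) [TropSemifield k] [TropSemigroup M] [TropModule k M] : Prop :=
  ∃ S : Finset M, TGenerates k (↑S : Set M)

/-- A basis: a generating set no proper subset of which generates. -/
def TBasis (k : Type*) {M : Type*} [TropSemifield k] [TropSemigroup M] [TropModule k M]
    (S : Set M) : Prop :=
  TGenerates k S ∧ ∀ T : Set M, T ⊂ S → ¬ TGenerates k T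

/-- `S` generates the subset `N` (viewed as a submodule of `M`). -/
def TGeneratesOn (k : Type*) {M : Type*} [TropSemifield k] [TropSemigroup M] [TropModule k M]
    (N S : Set M) : Prop :=
  ∀ v ∈ N, ∃ (r : ℕ) (a : Fin r → k) (x : Fin r → M), (∀ i, x i ∈ S) ∧ v = ∑ i, a i • x i

/-- A basis of the submodule `N ⊆ M`. -/
def TBasisOn (k : Type*) {M : Type*} [TropSemifield k] [TropSemigroup M] [TropModule k M]
    (N S : Set M) : Prop :=
  S ⊆ N ∧ TGeneratesOn k N S ∧ ∀ T : Set M, T ⊂ S → ¬ TGeneratesOn k N T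

/-- An extremal element. -/
def TExtremal {M : Type*} [Add M] [Zero M] (e : M) : Prop :=
  e ≠ 0 ∧ ∀ v w : M, v + w = e → v = e ∨ w = e

/-- The ray `k ⊙ e` generated by an element. -/
def tray (k : Type*) {M : Type*} [TropSemifield k] [TropSemigroup M] [TropModule k M]
    (e : M) : Set M :=
  Set.range fun a : k => a • e

/-- The set of extremal rays of `M`. -/
def extRays (k : Type*) (M : Type*) [TropSemifield k] [TropSemigroup M] [TropModule k M] :
    Set (Set M) :=
  {R : Set M | ∃ e : M, TExtremal e ∧ R = tray k e}

/-- The dimension of a straight reflexive module: the number of extremal rays. -/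
noncomputable def tdim (k : Type*) (M : Type*) [TropSemifield k] [TropSemigroup M]
    [TropModule k M] : ℕ :=
  (extRays k M).ncard

/-! ## Further notions on homomorphisms -/

/-- A lightly surjective homomorphism. -/
def LightlySurjective {k M N : Type*} [TropSemifield k] [TropSemigroup M] [TropModule k M]
    [TropSemigroup N] [TropModule k N] (α : TropHom k M N) : Prop :=
  ∀ w : N, ∃ v : M, tle w (α.toFun v)

/-- A lattice-preserving homomorphism. -/
def LatticePreserving {k M N : Type*} [TropSemifield k] [TropSemigroup M] [TropModule k M]
    [TropSemigroup N] [TropModule k N] (α : TropHom k M N) : Prop :=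
  ∀ v w : M, ∀ x : N, tle x (α.toFun v) → tle x (α.toFun w) →
    ∃ y : M, tle y v ∧ tle y w ∧ tle x (α.toFun y)

/-- The inclusion of the subset `N` into the ambient module is lattice-preserving. -/
def LatPresSet {M : Type*} [Add M] (N : Set M) : Prop :=
  ∀ v ∈ N, ∀ w ∈ N, ∀ x : M, tle x v → tle x w → ∃ y ∈ N, tle y v ∧ tle y w ∧ tle x y

/-- `η` is the dual element of `e`: `⟨e,η⟩ = 0` and
`⟨v,η⟩ ⊙ ⟨e,ξ⟩ ≤ ⟨v,ξ⟩` for all `v`, `ξ`. -/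
def IsDualElement {k M : Type*} [TropSemifield k] [TropSemigroup M] [TropModule k M]
    (e : M) (η : TropHom k M k) : Prop :=
  η.toFun e = 1 ∧ ∀ (v : M) (ξ : TropHom k M k), tle (η.toFun v * ξ.toFun e) (ξ.toFun v)

/-! ## Locators -/

/-- A locator of `M`: a lower-saturated subsemigroup of `(M, ⊕)` that generates `M`. -/
structure IsLocator (k : Type*) {M : Type*} [TropSemifield k] [TropSemigroup M] [TropModule k M]
    (S : Set M) : Prop where
  lower : ∀ v w : M, tle v w → w ∈ S → v ∈ S
  add_mem : ∀ v ∈ S, ∀ w ∈ S, v + w ∈ S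
  generates : TGenerates k S

/-- The multiplicative inverse `⊘a` (junk value `−∞` at `−∞`). -/
noncomputable def tinv {k : Type*} [TropSemifield k] (a : k) : k := by
  classical exact if h : a = 0 then 0 else Classical.choose (TropSemifield.exists_inv a h)

/-- Scalar multiplication on locators: `a ⊙̌ S = (⊘a) ⊙ S` for `a ≠ −∞`, `(−∞) ⊙̌ S = M`. -/
noncomputable def locSMul {k M : Type*} [TropSemifield k] [TropSemigroup M] [TropModule k M]
    (a : k) (S : Set M) : Set M := by
  classical exact if a = 0 then Set.univ else (fun v => tinv a • v) '' S

/-- `U` is the infimum of the locators `S`, `T` in `Loc(M)` (whose canonical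
order is reverse inclusion, the sum being intersection). -/
def IsLocInf (k : Type*) {M : Type*} [TropSemifield k] [TropSemigroup M] [TropModule k M]
    (S T U : Set M) : Prop :=
  IsLocator k U ∧ S ⊆ U ∧ T ⊆ U ∧
    ∀ W : Set M, IsLocator k W → S ⊆ W → T ⊆ W → U ⊆ W

/-! ## Submodules -/

/-- A subset of a `k`-module which is a submodule. -/
structure IsTSubmodule (k : Type*) {M : Type*} [TropSemifield k] [TropSemigroup M]
    [TropModule k M] (N : Set M) : Prop where
  zero_mem : (0 : M) ∈ N
  add_mem : ∀ v ∈ N, ∀ w ∈ N, v + w ∈ N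
  smul_mem : ∀ (a : k), ∀ v ∈ N, a • v ∈ N

/-- A bundled submodule of a `k`-module. -/
structure TSub (k : Type*) (M : Type*) [TropSemifield k] [TropSemigroup M] [TropModule k M] where
  carrier : Set M
  zero_mem : (0 : M) ∈ carrier
  add_mem : ∀ v ∈ carrier, ∀ w ∈ carrier, v + w ∈ carrier
  smul_mem : ∀ (a : k), ∀ v ∈ carrier, a • v ∈ carrier

instance TSub.instZero {k M : Type*} [TropSemifield k] [TropSemigroup M] [TropModule k M]
    (N : TSub k M) : Zero ↥N.carrier :=
  ⟨⟨0, N.zero_mem⟩⟩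

instance TSub.instAdd {k M : Type*} [TropSemifield k] [TropSemigroup M] [TropModule k M]
    (N : TSub k M) : Add ↥N.carrier :=
  ⟨fun v w => ⟨v.1 + w.1, N.add_mem v.1 v.2 w.1 w.2⟩⟩

instance TSub.instSMul {k M : Type*} [TropSemifield k] [TropSemigroup M] [TropModule k M]
    (N : TSub k M) : SMul k ↥N.carrier :=
  ⟨fun a v => ⟨a • v.1, N.smul_mem a v.1 v.2⟩⟩

instance TSub.semigroup {k M : Type*} [TropSemifield k] [TropSemigroup M] [TropModule k M]
    (N : TSub k M) : TropSemigroup ↥N.carrier where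
  add := (· + ·)
  zero := 0
  add_assoc a b c := Subtype.ext (add_assoc a.1 b.1 c.1)
  zero_add a := Subtype.ext (zero_add a.1)
  add_zero a := Subtype.ext (add_zero a.1)
  add_comm a b := Subtype.ext (add_comm a.1 b.1)
  nsmul := nsmulRec
  add_idem a := Subtype.ext (TropSemigroup.add_idem a.1)

instance TSub.module {k M : Type*} [TropSemifield k] [TropSemigroup M] [TropModule k M]
    (N : TSub k M) : TropModule k ↥N.carrier where
  smul := (· • ·)
  mul_smul a b v := Subtype.ext (TropModule.mul_smul a b v.1)
  one_smul v := Subtype.ext (TropModule.one_smul v.1)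
  add_smul a b v := Subtype.ext (TropModule.add_smul a b v.1)
  smul_add a v w := Subtype.ext (TropModule.smul_add a v.1 w.1)
  zero_smul v := Subtype.ext (TropModule.zero_smul v.1)
  smul_zero a := Subtype.ext (TropModule.smul_zero (M := M) a)

/-! ## Linear combinations -/

theorem tsmul_sum {k M : Type*} [TropSemifield k] [TropSemigroup M] [TropModule k M]
    (a : k) {ι : Type*} (s : Finset ι) (f : ι → M) :
    a • (∑ i ∈ s, f i) = ∑ i ∈ s, a • f i := by
  classical
  induction s using Finset.induction_on with
  | empty => simpa using TropModule.smul_zero (M := M) a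
  | insert _ _ h ih => rw [Finset.sum_insert h, Finset.sum_insert h, TropModule.smul_add, ih]

/-- The homomorphism `kⁿ → M` sending the `i`-th standard basis element to `e i`. -/
def linComb {k M : Type*} [TropSemifield k] [TropSemigroup M] [TropModule k M] {n : ℕ}
    (e : Fin n → M) : TropHom k (Fin n → k) M where
  toFun v := ∑ i, v i • e i
  map_zero' :=
    (Finset.sum_congr rfl fun i _ => TropModule.zero_smul (e i)).trans Finset.sum_const_zero
  map_add' v w := by
    rw [← Finset.sum_add_distrib]
    exact Finset.sum_congr rfl fun i _ => TropModule.add_smul (v i) (w i) (e i)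
  map_smul' a v := by
    rw [tsmul_sum]
    exact Finset.sum_congr rfl fun i _ => TropModule.mul_smul a (v i) (e i)

/-- The homomorphism `M → kⁿ` induced by an `n`-tuple of elements of `M∨`. -/
def dualTuple {k M : Type*} [TropSemifield k] [TropSemigroup M] [TropModule k M] {n : ℕ}
    (η : Fin n → TropHom k M k) : TropHom k M (Fin n → k) where
  toFun v := fun i => (η i).toFun v
  map_zero' := funext fun i => (η i).map_zero'
  map_add' v w := funext fun i => (η i).map_add' v w
  map_smul' a v := funext fun i => (η i).map_smul' a v

/-! ## Auxiliary order lemmas -/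

section Aux

variable {k M N : Type*} [TropSemifield k] [TropSemigroup M] [TropModule k M]
  [TropSemigroup N] [TropModule k N]

theorem tle_refl' (v : M) : tle v v := TropSemigroup.add_idem v

theorem tle_trans' {u v w : M} (h1 : tle u v) (h2 : tle v w) : tle u w := by
  unfold tle at *
  rw [← h2, ← add_assoc, h1]

theorem tle_antisymm' {v w : M} (h1 : tle v w) (h2 : tle w v) : v = w := by
  unfold tle at *
  rw [← h1, add_comm, h2]

theorem tle_add_left' (v w : M) : tle v (v + w) := by
  unfold tle
  rw [← add_assoc, TropSemigroup.add_idem]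

theorem tle_add_right' (v w : M) : tle w (v + w) := by
  rw [add_comm]; exact tle_add_left' w v

theorem add_tle' {v w u : M} (h1 : tle v u) (h2 : tle w u) : tle (v + w) u := by
  unfold tle at *
  rw [add_assoc, h2, h1]

theorem zero_tle' (v : M) : tle (0 : M) v := zero_add v

theorem tle_smul_left {a b : k} (v : M) (h : tle a b) : tle (a • v) (b • v) := by
  unfold tle at *
  rw [← TropModule.add_smul, h]

theorem tle_smul_right (a : k) {v w : M} (h : tle v w) : tle (a • v) (a • w) := by
  unfold tle at *
  rw [← TropModule.smul_add, h]

theorem tle_mul_right' {a b : k} (c : k) (h : tle a b) : tle (a * c) (b * c) := by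
  unfold tle at *
  rw [← add_mul, h]

theorem tle_mul_left' {a b : k} (c : k) (h : tle a b) : tle (c * a) (c * b) := by
  rw [mul_comm c a, mul_comm c b]; exact tle_mul_right' c h

theorem tinv_mul {a : k} (h : a ≠ 0) : a * tinv a = 1 := by
  unfold tinv
  rw [dif_neg h]
  exact Classical.choose_spec (TropSemifield.exists_inv a h)

theorem tle_of_mul_tle {c a b : k} (hc : c ≠ 0) (h : tle (a * c) (b * c)) : tle a b := by
  have h' := tle_mul_right' (tinv c) h
  rw [mul_assoc, mul_assoc, tinv_mul hc, mul_one, mul_one] at h'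
  exact h'

theorem TropHom.mono (ξ : TropHom k M N) {v w : M} (h : tle v w) :
    tle (ξ.toFun v) (ξ.toFun w) := by
  unfold tle at *
  rw [← ξ.map_add', h]

theorem TropHom.toFun_sum (f : TropHom k M N) {ι : Type*} (t : Finset ι) (g : ι → M) :
    f.toFun (∑ i ∈ t, g i) = ∑ i ∈ t, f.toFun (g i) := by
  classical
  induction t using Finset.induction_on with
  | empty => simpa using f.map_zero'
  | insert _ _ h ih => rw [Finset.sum_insert h, Finset.sum_insert h, f.map_add', ih]

theorem sum_toFun {ι : Type*} (t : Finset ι) (g : ι → TropHom k M N) (v : M) :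
    (∑ i ∈ t, g i).toFun v = ∑ i ∈ t, (g i).toFun v := by
  classical
  induction t using Finset.induction_on with
  | empty => rfl
  | insert _ _ h ih => rw [Finset.sum_insert h, Finset.sum_insert h, ← ih]; rfl

theorem sum_tle' {ι : Type*} (t : Finset ι) (f : ι → M) (u : M) (h : ∀ i ∈ t, tle (f i) u) :
    tle (∑ i ∈ t, f i) u := by
  classical
  induction t using Finset.induction_on with
  | empty => simpa using zero_tle' u
  | insert _ _ hns ih =>
    rename_i s i
    rw [Finset.sum_insert hns]
    exact add_tle' (h _ (Finset.mem_insert_self _ _))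
      (ih fun j hj => h j (Finset.mem_insert_of_mem hj))

theorem tle_sum' {ι : Type*} (t : Finset ι) (f : ι → M) {i : ι} (hi : i ∈ t) :
    tle (f i) (∑ j ∈ t, f j) := by
  classical
  rw [← Finset.add_sum_erase t f hi]
  exact tle_add_left' _ _

theorem sum_tle_sum' {ι : Type*} (t : Finset ι) (f g : ι → M)
    (h : ∀ i ∈ t, tle (f i) (g i)) : tle (∑ i ∈ t, f i) (∑ i ∈ t, g i) :=
  sum_tle' t f _ fun i hi => tle_trans' (h i hi) (tle_sum' t g hi)

theorem tsum_smul' {ι : Type*} (t : Finset ι) (f : ι → k) (v : M) :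
    (∑ i ∈ t, f i) • v = ∑ i ∈ t, f i • v := by
  classical
  induction t using Finset.induction_on with
  | empty => simpa using TropModule.zero_smul v
  | insert _ _ h ih => rw [Finset.sum_insert h, Finset.sum_insert h, TropModule.add_smul, ih]

/-! ## Consequences of pre-reflexivity -/

theorem eq_of_dual (hpre : Function.Injective (iotaFun k M)) {v w : M}
    (h : ∀ ξ : TropHom k M k, ξ.toFun v = ξ.toFun w) : v = w :=
  hpre (TropHom.ext' h)

theorem tle_of_dual (hpre : Function.Injective (iotaFun k M)) {v w : M}
    (h : ∀ ξ : TropHom k M k, tle (ξ.toFun v) (ξ.toFun w)) : tle v w := by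
  show v + w = w
  apply eq_of_dual hpre
  intro ξ
  rw [ξ.map_add']
  exact h ξ

theorem exists_sep (hpre : Function.Injective (iotaFun k M)) {e : M} (he : e ≠ 0) :
    ∃ ξ : TropHom k M k, ξ.toFun e ≠ 0 := by
  by_contra hc
  push_neg at hc
  exact he (eq_of_dual hpre fun ξ => by rw [hc ξ, ξ.map_zero'])

theorem smul_tle_cancel (hpre : Function.Injective (iotaFun k M)) {e : M} (he : e ≠ 0)
    {a b : k} (h : tle (a • e) (b • e)) : tle a b := by
  obtain ⟨ξ, hξ⟩ := exists_sep hpre he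
  have h' := ξ.mono h
  rw [ξ.map_smul', ξ.map_smul', smul_eq_mul, smul_eq_mul] at h'
  exact tle_of_mul_tle hξ h'

/-! ## The dual functional of an extremal element -/

theorem exists_eta (hqc : QuasiCompleteTSF k) (hpre : Function.Injective (iotaFun k M))
    (hstraight : Straight M) {e : M} (he0 : e ≠ 0)
    (hext : ∀ x y : M, x + y = e → x = e ∨ y = e) :
    ∃ η : TropHom k M k,
      (∀ v, tle (η.toFun v • e) v) ∧ ∀ v a, tle (a • e) v → tle a (η.toFun v) := by
  classical
  obtain ⟨ξ0, hξ0⟩ := exists_sep hpre he0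
  -- the "unit price" lemma: from a • e ≤ v one gets a ≤ tinv (ξ e) * ξ v for any ξ with ξ e ≠ 0
  have price : ∀ (ξ : TropHom k M k), ξ.toFun e ≠ 0 → ∀ (v : M) (a : k),
      tle (a • e) v → tle a (tinv (ξ.toFun e) * ξ.toFun v) := by
    intro ξ hξ v a ha
    have h1 := ξ.mono ha
    rw [ξ.map_smul', smul_eq_mul] at h1
    have h2 := tle_mul_right' (tinv (ξ.toFun e)) h1
    rw [mul_assoc, tinv_mul hξ, mul_one, mul_comm (ξ.toFun v)] at h2
    exact h2
  have hval : ∀ v : M, ∃ s : k, (∀ a, tle (a • e) v → tle a s) ∧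
      (∀ d, (∀ a, tle (a • e) v → tle a d) → tle s d) ∧ tle (s • e) v := by
    intro v
    set B : Set k := {d | ∀ a, tle (a • e) v → tle a d} with hB
    have hBne : B.Nonempty := ⟨_, price ξ0 hξ0 v⟩
    obtain ⟨s, hs1, hs2⟩ := hqc B hBne
    refine ⟨s, ?_, ?_, ?_⟩
    · intro a ha
      exact hs2 a fun d hd => hd a ha
    · intro d hd
      exact hs1 d hd
    · apply tle_of_dual hpre
      intro ξ
      rw [ξ.map_smul', smul_eq_mul]
      by_cases hξ : ξ.toFun e = 0
      · rw [hξ, mul_zero]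
        exact zero_tle' _
      · have hmem : tinv (ξ.toFun e) * ξ.toFun v ∈ B := price ξ hξ v
        have h3 := tle_mul_right' (ξ.toFun e) (hs1 _ hmem)
        have h4 : tinv (ξ.toFun e) * ξ.toFun v * ξ.toFun e = ξ.toFun v := by
          have := tinv_mul hξ
          calc tinv (ξ.toFun e) * ξ.toFun v * ξ.toFun e
              = ξ.toFun v * (ξ.toFun e * tinv (ξ.toFun e)) := by ring
            _ = ξ.toFun v := by rw [this, mul_one]
        rw [h4, mul_comm] at h3
        rw [mul_comm]
        exact h3
  choose s h1 h2 h3 using hval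
  -- a • e ≤ 0 implies a = 0
  have hzero : ∀ a : k, tle (a • e) 0 → a = 0 := by
    intro a ha
    have : a • e = (0 : k) • e := by
      rw [TropModule.zero_smul]
      exact tle_antisymm' ha (zero_tle' _)
    exact tle_antisymm' (smul_tle_cancel hpre he0 (this ▸ tle_refl' _))
      (zero_tle' a)
  refine ⟨⟨s, ?_, ?_, ?_⟩, h3, h1⟩
  · -- map_zero
    apply tle_antisymm'
    · exact h2 0 0 fun a ha => by rw [hzero a ha]; exact tle_refl' _
    · exact zero_tle' _
  · -- map_add
    intro v w
    apply tle_antisymm'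
    · apply h2
      intro a ha
      by_cases ha0 : a = 0
      · rw [ha0]; exact zero_tle' _
      obtain ⟨z1, hz1⟩ := hstraight.1 v (a • e)
      obtain ⟨z2, hz2⟩ := hstraight.1 w (a • e)
      have hsum := hstraight.2 v w (a • e) z1 z2 hz1 hz2
      have heq : z1 + z2 = a • e :=
        tle_antisymm' hsum.2.1 (hsum.2.2 (a • e) ha (tle_refl' _))
      have hsplit : tinv a • z1 + tinv a • z2 = e := by
        rw [← TropModule.smul_add, heq, ← TropModule.mul_smul, mul_comm, tinv_mul ha0,
          TropModule.one_smul]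
      have hback : ∀ z : M, tinv a • z = e → z = a • e := by
        intro z hz
        have : a • tinv a • z = a • e := by rw [hz]
        rwa [← TropModule.mul_smul, tinv_mul ha0, TropModule.one_smul] at this
      rcases hext _ _ hsplit with hc | hc
      · have : tle (a • e) v := (hback z1 hc) ▸ hz1.1
        exact tle_trans' (h1 v a this) (tle_add_left' _ _)
      · have : tle (a • e) w := (hback z2 hc) ▸ hz2.1
        exact tle_trans' (h1 w a this) (tle_add_right' _ _)
    · apply add_tle'
      · exact h1 _ _ (tle_trans' (h3 v) (tle_add_left' v w))
      · exact h1 _ _ (tle_trans' (h3 w) (tle_add_right' v w))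
  · -- map_smul
    intro b v
    rw [smul_eq_mul]
    apply tle_antisymm'
    · apply h2
      intro a ha
      by_cases hb0 : b = 0
      · rw [hb0, TropModule.zero_smul] at ha
        rw [hzero a ha, hb0, zero_mul]
        exact tle_refl' _
      · have h4 := tle_smul_right (tinv b) ha
        rw [← TropModule.mul_smul, ← TropModule.mul_smul, mul_comm (tinv b) b,
          tinv_mul hb0, TropModule.one_smul] at h4
        have h5 := tle_mul_left' b (h1 v _ h4)
        have h6 : b * (tinv b * a) = a := by
          have := tinv_mul hb0
          calc b * (tinv b * a) = (b * tinv b) * a := by ring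
            _ = a := by rw [this, one_mul]
        rwa [h6] at h5
    · apply h1
      rw [TropModule.mul_smul]
      exact tle_smul_right b (h3 v)

/-! ## Minimal generating sets -/

theorem repr_of_generates {S : Finset M} (hg : TGenerates k (↑S : Set M)) (v : M) :
    ∃ c : M → k, v = ∑ s ∈ S, c s • s := by
  classical
  obtain ⟨r, a, x, hx, hv⟩ := hg v
  refine ⟨fun s => ∑ i ∈ Finset.univ.filter (fun i => x i = s), a i, ?_⟩
  have key : ∀ s ∈ S, (∑ i ∈ Finset.univ.filter (fun i => x i = s), a i) • s
      = ∑ i ∈ Finset.univ.filter (fun i => x i = s), a i • x i := by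
    intro s _
    rw [tsum_smul']
    exact Finset.sum_congr rfl fun i hi => by
      rw [(Finset.mem_filter.mp hi).2]
  rw [Finset.sum_congr rfl key, Finset.sum_fiberwise_of_maps_to (fun i _ => hx i), hv]

theorem generates_of_repr {S : Finset M} (h : ∀ v : M, ∃ c : M → k, v = ∑ s ∈ S, c s • s) :
    TGenerates k (↑S : Set M) := by
  classical
  intro v
  obtain ⟨c, hc⟩ := h v
  refine ⟨S.card, fun i => c ((S.equivFin.symm i : S) : M),
    fun i => ((S.equivFin.symm i : S) : M), fun i => (S.equivFin.symm i).2, ?_⟩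
  rw [hc, ← Finset.sum_coe_sort S (fun s => c s • s)]
  exact (Equiv.sum_comp S.equivFin.symm (fun (j : S) => c (j : M) • (j : M))).symm

theorem exists_minimal_gen [DecidableEq M] (hfg : TFG k M) :
    ∃ S : Finset M, TGenerates k (↑S : Set M) ∧
      ∀ e ∈ S, ¬ TGenerates k (↑(S.erase e) : Set M) := by
  classical
  obtain ⟨S0, h0⟩ := hfg
  suffices H : ∀ (n : ℕ) (S : Finset M), S.card = n → TGenerates k (↑S : Set M) →
      ∃ T : Finset M, TGenerates k (↑T : Set M) ∧
        ∀ e ∈ T, ¬ TGenerates k (↑(T.erase e) : Set M) from H S0.card S0 rfl h0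
  intro n
  induction n using Nat.strong_induction_on with
  | _ n ih =>
    intro S hcard hgen
    by_cases hex : ∃ e ∈ S, TGenerates k (↑(S.erase e) : Set M)
    · obtain ⟨e, he, hgen'⟩ := hex
      exact ih (S.erase e).card (hcard ▸ Finset.card_erase_lt_of_mem he) _ rfl hgen'
    · push_neg at hex
      exact ⟨S, hgen, hex⟩

theorem generates_erase [DecidableEq M] {S : Finset M} (hg : TGenerates k (↑S : Set M)) {e : M} (he : e ∈ S)
    {d : M → k} (hd : e = ∑ s ∈ S.erase e, d s • s) :
    TGenerates k (↑(S.erase e) : Set M) := by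
  classical
  apply generates_of_repr
  intro v
  obtain ⟨c, hc⟩ := repr_of_generates hg v
  refine ⟨fun s => c e * d s + c s, ?_⟩
  have expand : ∀ s ∈ S.erase e, (c e * d s + c s) • s = c e • (d s • s) + c s • s := by
    intro s _
    rw [TropModule.add_smul, TropModule.mul_smul]
  rw [Finset.sum_congr rfl expand, Finset.sum_add_distrib, ← tsmul_sum, ← hd,
    Finset.add_sum_erase S (fun s => c s • s) he, hc]

theorem min_gen_extremal [DecidableEq M] (hto : TotallyOrderedTSF k)
    (hpre : Function.Injective (iotaFun k M)) {S : Finset M}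
    (hg : TGenerates k (↑S : Set M))
    (hmin : ∀ e ∈ S, ¬ TGenerates k (↑(S.erase e) : Set M)) :
    ∀ e ∈ S, e ≠ 0 ∧ ∀ x y : M, x + y = e → x = e ∨ y = e := by
  classical
  intro e he
  constructor
  · -- e ≠ 0
    intro h0
    apply hmin e he
    apply generates_of_repr
    intro v
    obtain ⟨c, hc⟩ := repr_of_generates hg v
    refine ⟨c, ?_⟩
    rw [hc, ← Finset.add_sum_erase S (fun s => c s • s) he, h0, TropModule.smul_zero,
      zero_add]
  · -- extremality
    intro x y hxy
    by_contra hcon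
    push_neg at hcon
    obtain ⟨hx, hy⟩ := hcon
    have hxe : tle x e := hxy ▸ tle_add_left' x y
    have hye : tle y e := hxy ▸ tle_add_right' x y
    obtain ⟨cx, hcx⟩ := repr_of_generates hg x
    obtain ⟨cy, hcy⟩ := repr_of_generates hg y
    set c : M → k := fun s => cx s + cy s with hcdef
    have hce : e = ∑ s ∈ S, c s • s := by
      rw [← hxy, hcx, hcy, ← Finset.sum_add_distrib]
      exact Finset.sum_congr rfl fun s _ => (TropModule.add_smul _ _ _).symm
    have he2 : e = c e • e + ∑ s ∈ S.erase e, c s • s := by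
      conv_lhs => rw [hce]
      exact (Finset.add_sum_erase S (fun s => c s • s) he).symm
    by_cases hcee : c e • e = e
    · -- Claim A: then x = e or y = e, contradiction
      have hsum : cx e • e + cy e • e = e := by
        rw [← TropModule.add_smul]; exact hcee
      rcases hto (cx e) (cy e) with hle | hle
      · -- cx e ≤ cy e so cy e • e = e
        have h5 : cx e • e + cy e • e = cy e • e := tle_smul_left (v := e) hle
        have h6 : cy e • e = e := by rw [← h5]; exact hsum
        have h7 : tle e y := by
          rw [← h6, hcy]
          exact tle_sum' S (fun s => cy s • s) he
        exact hy (tle_antisymm' hye h7)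
      · have h5 : cy e • e + cx e • e = cx e • e := tle_smul_left (v := e) hle
        have h6 : cx e • e = e := by rw [← h5, add_comm]; exact hsum
        have h7 : tle e x := by
          rw [← h6, hcx]
          exact tle_sum' S (fun s => cx s • s) he
        exact hx (tle_antisymm' hxe h7)
    · -- Claim B: e = r, contradicting minimality
      have hce1 : c e ≠ 1 := fun h => hcee (by rw [h, TropModule.one_smul])
      have her : e = ∑ s ∈ S.erase e, c s • s := by
        apply eq_of_dual hpre
        intro ξ
        have hξe : ξ.toFun e = c e * ξ.toFun e + ξ.toFun (∑ s ∈ S.erase e, c s • s) := by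
          conv_lhs => rw [he2]
          rw [ξ.map_add', ξ.map_smul', smul_eq_mul]
        set r := ∑ s ∈ S.erase e, c s • s
        rcases hto (c e * ξ.toFun e) (ξ.toFun r) with hcase | hcase
        · conv_lhs => rw [hξe]
          exact hcase
        · have heq : ξ.toFun e = c e * ξ.toFun e := by
            conv_lhs => rw [hξe]
            rw [add_comm]
            exact hcase
          by_cases hξ0 : ξ.toFun e = 0
          · have h8 : tle (ξ.toFun r) 0 := by
              rw [hξ0, mul_zero] at hcase
              exact hcase
            rw [hξ0, tle_antisymm' h8 (zero_tle' _)]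
          · exfalso
            apply hce1
            have h1 := tinv_mul hξ0
            calc c e = c e * (ξ.toFun e * tinv (ξ.toFun e)) := by rw [h1, mul_one]
              _ = (c e * ξ.toFun e) * tinv (ξ.toFun e) := by ring
              _ = ξ.toFun e * tinv (ξ.toFun e) := by rw [← heq]
              _ = 1 := h1
      exact hmin e he (generates_erase hg he her)

end Aux

theorem stmt3 {k M : Type*} [TropSemifield k] [TropSemigroup M] [TropModule k M]
    (hto : TotallyOrderedTSF k) (hqc : QuasiCompleteTSF k) (hrat : RationalTSF k)
    (hfg : TFG k M) (hstraight : Straight M)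
    (hpre : Function.Injective (iotaFun k M)) :
    Function.Bijective (iotaFun k M) := by
  classical
  refine ⟨hpre, ?_⟩
  obtain ⟨S, hSgen, hSmin⟩ := exists_minimal_gen hfg
  have hext := min_gen_extremal hto hpre hSgen hSmin
  have hη : ∀ e : M, ∃ η : TropHom k M k, e ∈ S →
      ((∀ v, tle (η.toFun v • e) v) ∧ ∀ v a, tle (a • e) v → tle a (η.toFun v)) := by
    intro e
    by_cases he : e ∈ S
    · obtain ⟨η, h1, h2⟩ := exists_eta hqc hpre hstraight (hext e he).1 (hext e he).2
      exact ⟨η, fun _ => ⟨h1, h2⟩⟩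
    · exact ⟨0, fun h => absurd h he⟩
  choose η hη using hη
  -- the key decomposition of every element of M
  have hkey : ∀ v : M, v = ∑ e ∈ S, (η e).toFun v • e := by
    intro v
    apply tle_antisymm'
    · obtain ⟨c, hc⟩ := repr_of_generates hSgen v
      conv_lhs => rw [hc]
      apply sum_tle_sum'
      intro s hs
      apply tle_smul_left
      apply (hη s hs).2 v (c s)
      rw [hc]
      exact tle_sum' S (fun t => c t • t) hs
    · exact sum_tle' S _ v fun e he => (hη e he).1 v
  -- every functional is a combination of the dual functionals
  have hxi : ∀ ξ : TropHom k M k, ξ = ∑ e ∈ S, ξ.toFun e • η e := by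
    intro ξ
    apply TropHom.ext'
    intro w
    rw [sum_toFun]
    calc ξ.toFun w = ξ.toFun (∑ e ∈ S, (η e).toFun w • e) := by rw [← hkey w]
      _ = ∑ e ∈ S, ξ.toFun ((η e).toFun w • e) := ξ.toFun_sum S _
      _ = ∑ e ∈ S, (ξ.toFun e • η e).toFun w := by
        refine Finset.sum_congr rfl fun e _ => ?_
        rw [ξ.map_smul']
        show (η e).toFun w • ξ.toFun e = ξ.toFun e • (η e).toFun w
        rw [smul_eq_mul, smul_eq_mul, mul_comm]
  -- surjectivity
  intro φ
  refine ⟨∑ e ∈ S, φ.toFun (η e) • e, ?_⟩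
  apply TropHom.ext'
  intro ξ
  show ξ.toFun (∑ e ∈ S, φ.toFun (η e) • e) = φ.toFun ξ
  rw [ξ.toFun_sum S _]
  conv_rhs => rw [hxi ξ, φ.toFun_sum S _]
  refine Finset.sum_congr rfl fun e _ => ?_
  rw [ξ.map_smul', φ.map_smul']
  show φ.toFun (η e) • ξ.toFun e = ξ.toFun e • φ.toFun (η e)
  rw [smul_eq_mul, smul_eq_mul, mul_comm]
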